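/- Let N ↪ L and N ↪ L' be two even overlattices of an even lattice N (i.e. finite-index embeddings). Then there is an isometry L ≅ L' commuting with the embeddings of N if and only if the subgroups G_L = L/N and G_{L'} = L'/N of A_N are equal. -/

import Mathlib

open LinearMap (BilinForm)

section aux

variable {N L : Type*} [AddCommGroup N] [Module ℤ N] [AddCommGroup L] [Module ℤ L]

lemma nik_exists_smul_mem (f : N →ₗ[ℤ] L)
    (hffin : Finite (L ⧸ LinearMap.range f)) (m : L) :
    ∃ k : ℤ, k ≠ 0 ∧ k • m ∈ LinearMap.range f := by
  set q : L ⧸ LinearMap.range f := Submodule.Quotient.mk m with hq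
  refine ⟨(addOrderOf q : ℤ), ?_, ?_⟩
  · exact_mod_cast (addOrderOf_pos q).ne'
  · have h : (addOrderOf q : ℤ) • q = 0 := by
      rw [natCast_zsmul]; exact addOrderOf_nsmul_eq_zero q
    have h2 : Submodule.Quotient.mk ((addOrderOf q : ℤ) • m)
        = (0 : L ⧸ LinearMap.range f) := by
      rw [Submodule.Quotient.mk_smul, ← hq, h]
    exact (Submodule.Quotient.mk_eq_zero _).mp h2

lemma nik_phi_inj (BL : BilinForm ℤ L) (hndL : BL.Nondegenerate)
    (f : N →ₗ[ℤ] L) (hffin : Finite (L ⧸ LinearMap.range f)) :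
    Function.Injective (f.dualMap ∘ₗ (BL : L →ₗ[ℤ] Module.Dual ℤ L)) := by
  rw [← LinearMap.ker_eq_bot]
  rw [Submodule.eq_bot_iff]
  intro l hl
  have hl' : ∀ n, BL l (f n) = 0 := by
    intro n
    have := congrFun (congrArg (fun φ : Module.Dual ℤ N => (φ : N → ℤ)) hl) n
    simpa using this
  apply hndL.1 l
  intro m
  obtain ⟨k, hk0, n, hn⟩ := nik_exists_smul_mem f hffin m
  have h3 : k * BL l m = 0 := by
    have := hl' n
    rw [hn] at this
    simpa using this
  exact (mul_eq_zero.mp h3).resolve_left hk0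


end aux

/-- Nikulin's Proposition 1.4.2(1). Let `f : N ↪ L` and `g : N ↪ L'` be two even
overlattices of an even lattice `N` (metric morphisms with finite cokernel). Then there is
an isometry `τ : L ≅ L'` commuting with the embeddings of `N` if and only if the subgroups
`G_L = L/N` and `G_{L'} = L'/N` of `A_N = N^∨/N` coincide. (Here `L/N` is viewed inside
`A_N` via `l ↦ (B_L(l, f·) mod N)`, using the chain `N ⊆ L ⊆ L^∨ ⊆ N^∨`.) -/
theorem stmt14 {N L L' : Type*}
    [AddCommGroup N] [Module ℤ N] [Module.Free ℤ N] [Module.Finite ℤ N]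
    [AddCommGroup L] [Module ℤ L] [Module.Free ℤ L] [Module.Finite ℤ L]
    [AddCommGroup L'] [Module ℤ L'] [Module.Free ℤ L'] [Module.Finite ℤ L']
    (BN : BilinForm ℤ N) (BL : BilinForm ℤ L) (BL' : BilinForm ℤ L')
    (hsymN : ∀ x y, BN x y = BN y x) (hsymL : ∀ x y, BL x y = BL y x)
    (hsymL' : ∀ x y, BL' x y = BL' y x)
    (hndN : BN.Nondegenerate) (hndL : BL.Nondegenerate) (hndL' : BL'.Nondegenerate)
    (hevN : ∀ x, Even (BN x x)) (hevL : ∀ x, Even (BL x x)) (hevL' : ∀ x, Even (BL' x x))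
    (f : N →ₗ[ℤ] L) (hf : ∀ x y, BL (f x) (f y) = BN x y)
    (hffin : Finite (L ⧸ LinearMap.range f))
    (g : N →ₗ[ℤ] L') (hg : ∀ x y, BL' (g x) (g y) = BN x y)
    (hgfin : Finite (L' ⧸ LinearMap.range g)) :
    (∃ τ : L ≃ₗ[ℤ] L', (∀ x y, BL' (τ x) (τ y) = BL x y) ∧ ∀ n, τ (f n) = g n) ↔
      Submodule.map (LinearMap.range (BN : N →ₗ[ℤ] Module.Dual ℤ N)).mkQ
          (LinearMap.range (f.dualMap ∘ₗ (BL : L →ₗ[ℤ] Module.Dual ℤ L)))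
        = Submodule.map (LinearMap.range (BN : N →ₗ[ℤ] Module.Dual ℤ N)).mkQ
          (LinearMap.range (g.dualMap ∘ₗ (BL' : L' →ₗ[ℤ] Module.Dual ℤ L'))) := by
  set φ : L →ₗ[ℤ] Module.Dual ℤ N := f.dualMap ∘ₗ (BL : L →ₗ[ℤ] Module.Dual ℤ L) with hφ
  set ψ : L' →ₗ[ℤ] Module.Dual ℤ N := g.dualMap ∘ₗ (BL' : L' →ₗ[ℤ] Module.Dual ℤ L') with hψ
  have hφap : ∀ (l : L) (n : N), φ l n = BL l (f n) := fun l n => rfl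
  have hψap : ∀ (l : L') (n : N), ψ l n = BL' l (g n) := fun l n => rfl
  have hφf : ∀ n : N, φ (f n) = BN n := by
    intro n; ext m; simpa [hφap] using hf n m
  have hψg : ∀ n : N, ψ (g n) = BN n := by
    intro n; ext m; simpa [hψap] using hg n m
  have hφinj : Function.Injective φ := nik_phi_inj BL hndL f hffin
  have hψinj : Function.Injective ψ := nik_phi_inj BL' hndL' g hgfin
  constructor
  · rintro ⟨τ, hτiso, hτf⟩
    have hcomp : ψ ∘ₗ (τ : L →ₗ[ℤ] L') = φ := by
      refine LinearMap.ext fun l => LinearMap.ext fun n => ?_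
      show BL' (τ l) (g n) = BL l (f n)
      rw [← hτf n]; exact hτiso l (f n)
    have hrange : LinearMap.range φ = LinearMap.range ψ := by
      rw [← hcomp, LinearMap.range_comp, LinearEquiv.range, Submodule.map_top]
    rw [hrange]
  · intro hmap
    -- the ranges of φ and ψ coincide
    have hkerφ : LinearMap.range (BN : N →ₗ[ℤ] Module.Dual ℤ N) ≤ LinearMap.range φ := by
      rintro x ⟨n, rfl⟩; exact ⟨f n, hφf n⟩
    have hkerψ : LinearMap.range (BN : N →ₗ[ℤ] Module.Dual ℤ N) ≤ LinearMap.range ψ := by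
      rintro x ⟨n, rfl⟩; exact ⟨g n, hψg n⟩
    have hrange : LinearMap.range φ = LinearMap.range ψ := by
      have h1 := congrArg
        (Submodule.comap (LinearMap.range (BN : N →ₗ[ℤ] Module.Dual ℤ N)).mkQ) hmap
      rwa [Submodule.comap_map_mkQ, Submodule.comap_map_mkQ,
        sup_eq_right.mpr hkerφ, sup_eq_right.mpr hkerψ] at h1
    -- build the isomorphism
    let eL : L ≃ₗ[ℤ] LinearMap.range φ := LinearEquiv.ofInjective φ hφinj
    let eL' : L' ≃ₗ[ℤ] LinearMap.range ψ := LinearEquiv.ofInjective ψ hψinj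
    let τ : L ≃ₗ[ℤ] L' :=
      eL ≪≫ₗ LinearEquiv.ofEq _ _ hrange ≪≫ₗ eL'.symm
    have hkey : ∀ x : L, ψ (τ x) = φ x := by
      intro x
      have : eL' (τ x) = LinearEquiv.ofEq _ _ hrange (eL x) := by
        simp [τ, LinearEquiv.apply_symm_apply]
      have h2 := congrArg (Subtype.val) this
      simpa [eL, eL'] using h2
    have hτf : ∀ n : N, τ (f n) = g n := by
      intro n
      apply hψinj
      rw [hkey, hφf, hψg]
    refine ⟨τ, ?_, hτf⟩
    intro x y
    obtain ⟨k, hk0, m, hm⟩ := nik_exists_smul_mem g hgfin (τ y)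
    have hky : k • y = f m := by
      apply τ.injective
      have hs : τ (k • y) = k • τ y := by simpa using LinearMap.map_smul τ.toLinearMap k y
      rw [hs, hτf m]
      exact hm.symm
    have e1 : BL' (τ x) (g m) = k * BL' (τ x) (τ y) := by rw [hm]; simp
    have e2 : BL x (f m) = k * BL x y := by rw [← hky]; simp
    have e3 : BL' (τ x) (g m) = BL x (f m) := LinearMap.congr_fun (hkey x) m
    apply mul_left_cancel₀ hk0
    rw [← e1, e3, e2]
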